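/- Let V ⊆ A₀ be compact with V^T complete. Then V** = (V^T)^⊥, where (V^T)^⊥ = { h ∈ A₀ : (g*h)(1) ≠ 0 for all g ∈ V^T }. -/

import Mathlib

open Metric Set Filter

noncomputable def coeff (f : ℂ → ℂ) (k : ℕ) : ℂ := iteratedDeriv k f 0 / (k.factorial : ℂ)

noncomputable def hadamard (f g : ℂ → ℂ) : ℂ → ℂ := fun z => ∑' k : ℕ, coeff f k * coeff g k * z ^ k

def Pt (x : ℂ) (f : ℂ → ℂ) : ℂ → ℂ := fun z => f (x * z)

def A0 : Set (ℂ → ℂ) := {f | AnalyticOnNhd ℂ f (ball (0:ℂ) 1) ∧ f 0 = 1}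

def cm (V : Set (ℂ → ℂ)) : Set (ℂ → ℂ) := {h | ∃ f ∈ V, ∃ x : ℂ, ‖x‖ ≤ 1 ∧ h = Pt x f}

def dual (V : Set (ℂ → ℂ)) : Set (ℂ → ℂ) :=
  {g ∈ A0 | ∀ f ∈ V, ∀ z ∈ ball (0:ℂ) 1, hadamard f g z ≠ 0}

def eligible (g : ℂ → ℂ) : Prop := ∃ R > 1, AnalyticOnNhd ℂ g (ball (0:ℂ) R)

def VT (V : Set (ℂ → ℂ)) : Set (ℂ → ℂ) :=
  {g | eligible g ∧ g 0 = 1 ∧ ∀ f ∈ V, hadamard f g 1 ≠ 0}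

def perp (U : Set (ℂ → ℂ)) : Set (ℂ → ℂ) :=
  {h ∈ A0 | ∀ g ∈ U, hadamard g h 1 ≠ 0}

def lamSet (g : ℂ → ℂ) (V : Set (ℂ → ℂ)) : Set ℂ := (fun f => hadamard f g 1) '' V

def S (R : ℝ) : Set (Set ℂ) := {K | K ⊆ ball (0:ℂ) R ∧ IsCompact K}

noncomputable def closLU (R : ℝ) (U : Set (ℂ → ℂ)) : Set (ℂ → ℂ) :=
  (UniformOnFun.toFun (S R)) '' closure ((UniformOnFun.ofFun (S R)) '' U)

/-! ### Auxiliary lemmas -/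

open Complex
open scoped UniformConvergence

lemma iter_scale {f : ℂ → ℂ} {r : ℝ} (hf : AnalyticOnNhd ℂ f (ball (0:ℂ) r)) (x : ℂ) :
    ∀ n : ℕ, ∀ z : ℂ, x * z ∈ ball (0:ℂ) r →
      iteratedDeriv n (fun w => f (x * w)) z = x ^ n * iteratedDeriv n f (x * z) := by
  intro n
  induction n with
  | zero => simp
  | succ n ih =>
    intro z hz
    have hOpen : IsOpen {w : ℂ | x * w ∈ ball (0:ℂ) r} :=
      isOpen_ball.preimage (by fun_prop)
    have hF : AnalyticOnNhd ℂ (iteratedDeriv n f) (ball (0:ℂ) r) := by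
      rw [iteratedDeriv_eq_iterate]
      exact hf.iterated_deriv n
    have hev : (iteratedDeriv n (fun w => f (x * w))) =ᶠ[nhds z]
        (fun w => x ^ n * iteratedDeriv n f (x * w)) :=
      eventually_of_mem (hOpen.mem_nhds hz) (fun w hw => ih w hw)
    rw [iteratedDeriv_succ, hev.deriv_eq, iteratedDeriv_succ]
    have hD : HasDerivAt (iteratedDeriv n f) (deriv (iteratedDeriv n f) (x*z)) (x*z) :=
      ((hF (x*z) hz).differentiableAt).hasDerivAt
    have hinner : HasDerivAt (fun w : ℂ => x * w) x z := by
      simpa using (hasDerivAt_id z).const_mul x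
    have hcomp : HasDerivAt (fun w => iteratedDeriv n f (x * w))
        (deriv (iteratedDeriv n f) (x*z) * x) z := by
      have := hD.comp z hinner
      simpa [Function.comp_def] using this
    rw [deriv_const_mul _ hcomp.differentiableAt, hcomp.deriv]
    ring

lemma coeff_Pt {f : ℂ → ℂ} {r : ℝ} (hf : AnalyticOnNhd ℂ f (ball (0:ℂ) r)) (hr : 0 < r)
    (x : ℂ) (k : ℕ) : coeff (Pt x f) k = x ^ k * coeff f k := by
  have h0 : x * 0 ∈ ball (0:ℂ) r := by simpa using hr
  have := iter_scale hf x k 0 h0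
  simp only [coeff]
  rw [show Pt x f = fun w => f (x*w) from rfl, this, mul_zero, mul_div_assoc]

lemma hadamard_Pt_right {g : ℂ → ℂ} {r : ℝ} (hg : AnalyticOnNhd ℂ g (ball (0:ℂ) r)) (hr : 0 < r)
    (f : ℂ → ℂ) (x z : ℂ) : hadamard f (Pt x g) z = hadamard f g (x * z) :=
  tsum_congr fun k => by rw [coeff_Pt hg hr]; ring

lemma hadamard_Pt_left {f : ℂ → ℂ} {r : ℝ} (hf : AnalyticOnNhd ℂ f (ball (0:ℂ) r)) (hr : 0 < r)
    (h : ℂ → ℂ) (x z : ℂ) : hadamard (Pt x f) h z = hadamard f h (x * z) :=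
  tsum_congr fun k => by rw [coeff_Pt hf hr]; ring

lemma coeff_zero_eq (f : ℂ → ℂ) : coeff f 0 = f 0 := by simp [coeff]

lemma hadamard_zero (f g : ℂ → ℂ) : hadamard f g 0 = f 0 * g 0 := by
  have : hadamard f g 0 = coeff f 0 * coeff g 0 * (0:ℂ) ^ (0:ℕ) :=
    tsum_eq_single 0 (fun k hk => by simp [zero_pow hk])
  simp [this, coeff_zero_eq]

lemma Pt_analyticAt {g : ℂ → ℂ} {r : ℝ} (hg : AnalyticOnNhd ℂ g (ball (0:ℂ) r))
    {x z : ℂ} (hz : x * z ∈ ball (0:ℂ) r) : AnalyticAt ℂ (Pt x g) z := by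
  have h1 : AnalyticAt ℂ (fun w : ℂ => x * w) z := analyticAt_const.mul analyticAt_id
  have := (hg _ hz).comp h1
  exact (by simpa [Function.comp_def] using this : AnalyticAt ℂ (fun w => g (x * w)) z)

lemma coeff_eq_series {f : ℂ → ℂ} {p : FormalMultilinearSeries ℂ ℂ ℂ} {r : ENNReal}
    (h : HasFPowerSeriesOnBall f p 0 r) (k : ℕ) : coeff f k = p k (fun _ => 1) := by
  have h1 : (k.factorial) • p k (fun _ => 1) = iteratedFDeriv ℂ k f 0 (fun _ => 1) :=
    h.factorial_smul 1 k
  have h2 : (iteratedFDeriv ℂ k f 0 : (Fin k → ℂ) → ℂ) (fun _ => 1)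
      = (∏ _i : Fin k, (1:ℂ)) • iteratedDeriv k f 0 :=
    iteratedFDeriv_apply_eq_iteratedDeriv_mul_prod
  simp only [Finset.prod_const, one_pow, one_smul] at h2
  rw [show coeff f k = iteratedDeriv k f 0 / (k.factorial : ℂ) from rfl, ← h2, ← h1]
  simp only [nsmul_eq_mul]
  rw [mul_div_cancel_left₀]
  exact_mod_cast Nat.factorial_ne_zero k

lemma coeff_cauchy {f : ℂ → ℂ} {ρ : ℝ} (hρ : 0 < ρ)
    (hf : DifferentiableOn ℂ f (closedBall (0:ℂ) ρ)) (k : ℕ) :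
    coeff f k = (2 * Real.pi * I)⁻¹ * ∮ z in C(0, ρ), z⁻¹ ^ k * (z⁻¹ * f z) := by
  set ρ' : NNReal := ⟨ρ, hρ.le⟩ with hρ'
  have hρ'' : (ρ' : ℝ) = ρ := rfl
  have h : HasFPowerSeriesOnBall f (cauchyPowerSeries f 0 ρ) 0 ρ' := by
    have := DifferentiableOn.hasFPowerSeriesOnBall (R := ρ') (c := (0:ℂ)) (f := f)
      (by rwa [hρ'']) (by rw [← NNReal.coe_pos]; exact hρ)
    simpa [hρ''] using this
  rw [coeff_eq_series h k, cauchyPowerSeries_apply]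
  simp only [sub_zero, one_div, smul_eq_mul]

lemma norm_two_pi_I_inv : ‖(2 * Real.pi * I : ℂ)⁻¹‖ = (2 * Real.pi)⁻¹ := by
  simp [norm_inv, norm_mul, Real.pi_nonneg, abs_of_nonneg]

lemma circle_bound {u : ℂ → ℂ} {ρ M : ℝ} (hρ : 0 < ρ)
    (h : ∀ z ∈ sphere (0:ℂ) ρ, ‖u z‖ ≤ M) (k : ℕ) :
    ‖(2 * Real.pi * I : ℂ)⁻¹ * ∮ z in C(0, ρ), z⁻¹ ^ k * (z⁻¹ * u z)‖ ≤ M / ρ ^ k := by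
  have hb : ∀ z ∈ sphere (0:ℂ) ρ, ‖z⁻¹ ^ k * (z⁻¹ * u z)‖ ≤ ρ⁻¹ ^ k * (ρ⁻¹ * M) := by
    intro z hz
    have hzn : ‖z‖ = ρ := by simpa using hz
    rw [norm_mul, norm_mul, norm_pow, norm_inv, hzn]
    have h1 : ρ⁻¹ * ‖u z‖ ≤ ρ⁻¹ * M :=
      mul_le_mul_of_nonneg_left (h z hz) (inv_nonneg.mpr hρ.le)
    exact mul_le_mul_of_nonneg_left h1 (pow_nonneg (inv_nonneg.mpr hρ.le) k)
  have hint : ‖∮ z in C(0, ρ), z⁻¹ ^ k * (z⁻¹ * u z)‖ ≤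
      2 * Real.pi * ρ * (ρ⁻¹ ^ k * (ρ⁻¹ * M)) :=
    by simpa [_root_.abs_of_nonneg hρ.le] using
      circleIntegral.norm_integral_le_of_norm_le_const hρ.le hb
  rw [norm_mul, norm_two_pi_I_inv]
  calc (2 * Real.pi)⁻¹ * ‖∮ z in C(0, ρ), z⁻¹ ^ k * (z⁻¹ * u z)‖
      ≤ (2 * Real.pi)⁻¹ * (2 * Real.pi * ρ * (ρ⁻¹ ^ k * (ρ⁻¹ * M))) := by
        apply mul_le_mul_of_nonneg_left hint
        positivity
    _ = M / ρ ^ k := by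
        field_simp
        rw [mul_right_comm, ← mul_pow, one_div, inv_mul_cancel₀ hρ.ne', one_pow, one_mul]

lemma integrable_aux {u : ℂ → ℂ} {ρ : ℝ} (hρ : 0 < ρ) (hu : ContinuousOn u (sphere (0:ℂ) ρ))
    (k : ℕ) : CircleIntegrable (fun z => z⁻¹ ^ k * (z⁻¹ * u z)) 0 ρ := by
  apply ContinuousOn.circleIntegrable hρ.le
  have hz0 : ∀ z ∈ sphere (0:ℂ) ρ, z ≠ 0 := by
    intro z hz h0
    rw [h0] at hz
    simp at hz
    exact hρ.ne' (by simpa using hz.symm)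
  have hinv : ContinuousOn (fun z : ℂ => z⁻¹) (sphere (0:ℂ) ρ) :=
    ContinuousOn.inv₀ continuousOn_id hz0
  exact ((hinv.pow k).mul (hinv.mul hu))

lemma coeff_norm_le {f : ℂ → ℂ} {ρ M : ℝ} (hρ : 0 < ρ)
    (hf : DifferentiableOn ℂ f (closedBall (0:ℂ) ρ))
    (h : ∀ z ∈ sphere (0:ℂ) ρ, ‖f z‖ ≤ M) (k : ℕ) : ‖coeff f k‖ ≤ M / ρ ^ k := by
  rw [coeff_cauchy hρ hf k]
  exact circle_bound hρ h k

lemma coeff_dist_le {f f' : ℂ → ℂ} {ρ δ : ℝ} (hρ : 0 < ρ)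
    (hf : DifferentiableOn ℂ f (closedBall (0:ℂ) ρ))
    (hf' : DifferentiableOn ℂ f' (closedBall (0:ℂ) ρ))
    (h : ∀ z ∈ sphere (0:ℂ) ρ, ‖f z - f' z‖ ≤ δ) (k : ℕ) :
    ‖coeff f k - coeff f' k‖ ≤ δ / ρ ^ k := by
  have hsub : sphere (0:ℂ) ρ ⊆ closedBall (0:ℂ) ρ := sphere_subset_closedBall
  have i1 := integrable_aux hρ ((hf.continuousOn).mono hsub) k
  have i2 := integrable_aux hρ ((hf'.continuousOn).mono hsub) k
  rw [coeff_cauchy hρ hf k, coeff_cauchy hρ hf' k, ← mul_sub,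
    ← circleIntegral.integral_sub i1 i2]
  rw [circleIntegral.integral_congr
      (f := fun z : ℂ => z⁻¹ ^ k * (z⁻¹ * f z) - z⁻¹ ^ k * (z⁻¹ * f' z))
      (g := fun z : ℂ => z⁻¹ ^ k * (z⁻¹ * (f z - f' z))) hρ.le (fun z _ => by ring)]
  exact circle_bound hρ h k

/-! ### Membership and basic facts -/

lemma closedBall_mem_S {ρ : ℝ} (hρ1 : ρ < 1) : closedBall (0:ℂ) ρ ∈ S 1 :=
  ⟨closedBall_subset_ball hρ1, isCompact_closedBall _ _⟩

lemma A0_diffOn {f : ℂ → ℂ} (hf : f ∈ A0) {ρ : ℝ} (hρ1 : ρ < 1) :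
    DifferentiableOn ℂ f (closedBall (0:ℂ) ρ) := by
  intro z hz
  exact ((hf.1 z (closedBall_subset_ball hρ1 hz)).differentiableAt).differentiableWithinAt

/-- Continuity of the k-th Taylor coefficient on the image of `V` in the
topology of uniform convergence on compacta. -/
lemma coeff_contOn {V : Set (ℂ → ℂ)} (hV : V ⊆ A0) {ρ : ℝ} (hρ0 : 0 < ρ) (hρ1 : ρ < 1) (k : ℕ) :
    ContinuousOn (fun F : (ℂ →ᵤ[S 1] ℂ) => coeff (UniformOnFun.toFun (S 1) F) k)
      ((UniformOnFun.ofFun (S 1)) '' V) := by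
  intro F₀ hF₀
  rw [ContinuousWithinAt, Metric.tendsto_nhds]
  intro ε hε
  set δ := ε / 2 * ρ ^ k with hδdef
  have hδ0 : 0 < δ := by positivity
  have hent : {p : ℂ × ℂ | dist p.1 p.2 ≤ δ} ∈ uniformity ℂ :=
    mem_of_superset (Metric.dist_mem_uniformity hδ0) (fun p (hp : dist p.1 p.2 < _) => le_of_lt hp)
  have hnh := UniformOnFun.gen_mem_nhds ℂ (S 1) F₀ (closedBall_mem_S hρ1) hent
  filter_upwards [mem_nhdsWithin_of_mem_nhds hnh, self_mem_nhdsWithin] with F hFgen hFK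
  obtain ⟨f, hfV, rfl⟩ := hFK
  obtain ⟨f₀, hf₀V, hF₀eq⟩ := hF₀
  have htf : UniformOnFun.toFun (S 1) ((UniformOnFun.ofFun (S 1)) f) = f := rfl
  have htf₀ : UniformOnFun.toFun (S 1) F₀ = f₀ := by rw [← hF₀eq]; rfl
  rw [htf, htf₀]
  have hdiff : ∀ z ∈ sphere (0:ℂ) ρ, ‖f z - f₀ z‖ ≤ δ := by
    intro z hz
    have := hFgen z (sphere_subset_closedBall hz)
    rw [htf₀] at this
    simpa [dist_eq_norm, norm_sub_rev] using this
  have hcd := coeff_dist_le hρ0 (A0_diffOn (hV hfV) hρ1) (A0_diffOn (hV hf₀V) hρ1) hdiff k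
  rw [dist_eq_norm]
  calc ‖coeff f k - coeff f₀ k‖ ≤ δ / ρ ^ k := hcd
    _ = ε / 2 := by rw [hδdef]; field_simp
    _ < ε := by linarith

/-- A uniform bound on a compact family on a closed sub-disk. -/
lemma uniform_bound {V : Set (ℂ → ℂ)} (hV : V ⊆ A0)
    (hc : IsCompact ((UniformOnFun.ofFun (S 1)) '' V)) {ρ : ℝ} (hρ1 : ρ < 1) :
    ∃ M : ℝ, 0 ≤ M ∧ ∀ f ∈ V, ∀ z ∈ closedBall (0:ℂ) ρ, ‖f z‖ ≤ M := by
  classical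
  set K := (UniformOnFun.ofFun (S 1)) '' V with hK
  have hent : {p : ℂ × ℂ | dist p.1 p.2 ≤ 1} ∈ uniformity ℂ :=
    mem_of_superset (Metric.dist_mem_uniformity one_pos) (fun p (hp : dist p.1 p.2 < _) => le_of_lt hp)
  have hb : ∀ F ∈ K, ∃ C : ℝ, 0 ≤ C ∧
      ∀ z ∈ closedBall (0:ℂ) ρ, ‖(UniformOnFun.toFun (S 1) F) z‖ ≤ C := by
    rintro F ⟨f, hf, rfl⟩
    obtain ⟨C, hC⟩ := (isCompact_closedBall (0:ℂ) ρ).exists_bound_of_continuousOn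
      ((A0_diffOn (hV hf) hρ1).continuousOn)
    exact ⟨max C 0, le_max_right _ _, fun z hz => (hC z hz).trans (le_max_left _ _)⟩
  choose! C hC0 hC using hb
  obtain ⟨t, ht⟩ := hc.elim_nhds_subcover'
    (fun F _ => {G | ∀ x ∈ closedBall (0:ℂ) ρ,
      (UniformOnFun.toFun (S 1) F x, UniformOnFun.toFun (S 1) G x) ∈ {p : ℂ × ℂ | dist p.1 p.2 ≤ 1}})
    (fun F _ => UniformOnFun.gen_mem_nhds ℂ (S 1) F (closedBall_mem_S hρ1) hent)
  refine ⟨∑ F ∈ t, (C F.1 + 1), Finset.sum_nonneg (fun F _ => by have := hC0 F.1 F.2; show (0:ℝ) ≤ C F.1 + 1; linarith), ?_⟩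
  intro f hf z hz
  have hFK : (UniformOnFun.ofFun (S 1)) f ∈ K := mem_image_of_mem _ hf
  have := ht hFK
  rw [mem_iUnion₂] at this
  obtain ⟨F₀, hF₀t, hF₀⟩ := this
  have hd : dist (UniformOnFun.toFun (S 1) F₀.1 z) (f z) ≤ 1 := hF₀ z hz
  have h1 : ‖f z‖ ≤ ‖UniformOnFun.toFun (S 1) F₀.1 z‖ + 1 := by
    have : ‖f z‖ - ‖UniformOnFun.toFun (S 1) F₀.1 z‖ ≤ dist (UniformOnFun.toFun (S 1) F₀.1 z) (f z) := by
      rw [dist_eq_norm, norm_sub_rev]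
      exact norm_sub_norm_le _ _
    linarith
  have h2 : ‖UniformOnFun.toFun (S 1) F₀.1 z‖ ≤ C F₀.1 := hC F₀.1 F₀.2 z hz
  have h3 : C F₀.1 + 1 ≤ ∑ F ∈ t, (C F.1 + 1) :=
    Finset.single_le_sum (f := fun F => C F.1 + 1)
      (fun F _ => by have := hC0 F.1 F.2; show (0:ℝ) ≤ C F.1 + 1; linarith) hF₀t
  linarith

lemma aux_alg {M Cg r₀ ρ r₁ : ℝ} (hρ : ρ ≠ 0) (hr₁ : r₁ ≠ 0) (k : ℕ) :
    (M / ρ ^ k) * (Cg / r₁ ^ k) * r₀ ^ k = (M * Cg) * (r₀ / (ρ * r₁)) ^ k := by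
  rw [div_pow, mul_pow]
  field_simp

/-- The key compactness step: nonvanishing of `f * g` on the closed disk, for all `f ∈ V`,
extends to a slightly larger disk uniformly in `f`. -/
lemma extend_nonvanishing {V : Set (ℂ → ℂ)} (hV : V ⊆ A0)
    (hc : IsCompact ((UniformOnFun.ofFun (S 1)) '' V))
    {g : ℂ → ℂ} {R : ℝ} (hgan : AnalyticOnNhd ℂ g (ball (0:ℂ) R)) (hR : 1 < R)
    (hA : ∀ f ∈ V, ∀ w : ℂ, ‖w‖ ≤ 1 → hadamard f g w ≠ 0) :
    ∃ x : ℝ, 1 < x ∧ x < R ∧ ∀ f ∈ V, ∀ w : ℂ, ‖w‖ < x → hadamard f g w ≠ 0 := by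
  classical
  set r₀ : ℝ := (1 + R) / 2 with hr₀
  set r₁ : ℝ := (r₀ + R) / 2 with hr₁
  have h1r₀ : 1 < r₀ := by rw [hr₀]; linarith
  have hr₀r₁ : r₀ < r₁ := by rw [hr₁]; linarith [show r₀ < R by rw [hr₀]; linarith]
  have hr₁R : r₁ < R := by rw [hr₁]; linarith [show r₀ < R by rw [hr₀]; linarith]
  have hr₀0 : 0 < r₀ := by linarith
  have hr₁0 : 0 < r₁ := by linarith
  set q : ℝ := r₀ / r₁ with hq
  have hq1 : q < 1 := by rw [hq]; exact (div_lt_one hr₁0).mpr hr₀r₁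
  have hq0 : 0 < q := by positivity
  set ρ : ℝ := (q + 1) / 2 with hρ
  have hρ0 : 0 < ρ := by positivity
  have hρ1 : ρ < 1 := by rw [hρ]; linarith
  have hqρ : q < ρ := by rw [hρ]; linarith
  -- bound on the coefficients of g
  have hgdiff : DifferentiableOn ℂ g (closedBall (0:ℂ) r₁) := by
    intro z hz
    exact ((hgan z (closedBall_subset_ball hr₁R hz)).differentiableAt).differentiableWithinAt
  obtain ⟨Cg', hCg'⟩ := (isCompact_sphere (0:ℂ) r₁).exists_bound_of_continuousOn
    (hgdiff.continuousOn.mono sphere_subset_closedBall)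
  set Cg : ℝ := max Cg' 0 with hCgdef
  have hCg0 : 0 ≤ Cg := le_max_right _ _
  have hCg : ∀ k, ‖coeff g k‖ ≤ Cg / r₁ ^ k := fun k =>
    coeff_norm_le hr₁0 hgdiff (fun z hz => (hCg' z hz).trans (le_max_left _ _)) k
  -- uniform bound on the coefficients of members of V
  obtain ⟨M, hM0, hM⟩ := uniform_bound hV hc hρ1
  have hcf : ∀ f ∈ V, ∀ k, ‖coeff f k‖ ≤ M / ρ ^ k := by
    intro f hf k
    exact coeff_norm_le hρ0 (A0_diffOn (hV hf) hρ1)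
      (fun z hz => hM f hf z (sphere_subset_closedBall hz)) k
  -- the function G
  set K := (UniformOnFun.ofFun (S 1)) '' V with hK
  set G : (ℂ →ᵤ[S 1] ℂ) × ℂ → ℂ :=
    fun p => hadamard (UniformOnFun.toFun (S 1) p.1) g p.2 with hG
  have hq' : 0 < r₀ / (ρ * r₁) := by positivity
  have hq'1 : r₀ / (ρ * r₁) < 1 := by
    rw [div_lt_one (by positivity)]
    calc r₀ = q * r₁ := by rw [hq]; field_simp
      _ < ρ * r₁ := by exact mul_lt_mul_of_pos_right hqρ hr₁0
  have hGcont : ContinuousOn G (K ×ˢ closedBall (0:ℂ) r₀) := by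
    have key : ContinuousOn (fun p : (ℂ →ᵤ[S 1] ℂ) × ℂ =>
        ∑' k : ℕ, coeff (UniformOnFun.toFun (S 1) p.1) k * coeff g k * p.2 ^ k)
        (K ×ˢ closedBall (0:ℂ) r₀) := by
      apply continuousOn_tsum (u := fun k => (M * Cg) * (r₀ / (ρ * r₁)) ^ k)
      · intro k
        have h1 : ContinuousOn (fun p : (ℂ →ᵤ[S 1] ℂ) × ℂ =>
            coeff (UniformOnFun.toFun (S 1) p.1) k) (K ×ˢ closedBall (0:ℂ) r₀) := by
          apply (coeff_contOn hV hρ0 hρ1 k).comp continuousOn_fst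
          intro p hp
          exact (mem_prod.mp hp).1
        exact (h1.mul continuousOn_const).mul ((continuous_snd.pow k).continuousOn)
      · exact (summable_geometric_of_lt_one hq'.le hq'1).mul_left _
      · rintro k ⟨F, w⟩ hp
        obtain ⟨hFK, hw⟩ := mem_prod.mp hp
        obtain ⟨f, hfV, rfl⟩ := hFK
        have htf : UniformOnFun.toFun (S 1) ((UniformOnFun.ofFun (S 1)) f) = f := rfl
        rw [htf, norm_mul, norm_mul, norm_pow]
        have hwn : ‖w‖ ≤ r₀ := by rwa [mem_closedBall_zero_iff] at hw
        have e1 : ‖coeff f k‖ ≤ M / ρ ^ k := hcf f hfV k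
        have e2 : ‖coeff g k‖ ≤ Cg / r₁ ^ k := hCg k
        have e3 : ‖w‖ ^ k ≤ r₀ ^ k := pow_le_pow_left₀ (norm_nonneg _) hwn k
        calc ‖coeff f k‖ * ‖coeff g k‖ * ‖w‖ ^ k
            ≤ (M / ρ ^ k) * (Cg / r₁ ^ k) * r₀ ^ k := by
              apply mul_le_mul _ e3 (pow_nonneg (norm_nonneg _) k)
              · exact mul_nonneg (div_nonneg hM0 (pow_pos hρ0 k).le)
                  (div_nonneg hCg0 (pow_pos hr₁0 k).le)
              · exact mul_le_mul e1 e2 (norm_nonneg _) (div_nonneg hM0 (pow_pos hρ0 k).le)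
          _ = (M * Cg) * (r₀ / (ρ * r₁)) ^ k := aux_alg hρ0.ne' hr₁0.ne' k
    exact key
  -- the zero set
  have hKD : IsCompact (K ×ˢ closedBall (0:ℂ) r₀) := hc.prod (isCompact_closedBall _ _)
  haveI : CompactSpace (K ×ˢ closedBall (0:ℂ) r₀) := isCompact_iff_compactSpace.mp hKD
  have hcl : IsClosed {p : (K ×ˢ closedBall (0:ℂ) r₀ : Set _) | G p.1 = 0} :=
    IsClosed.preimage hGcont.restrict isClosed_singleton
  have hZc : IsCompact (Subtype.val '' {p : (K ×ˢ closedBall (0:ℂ) r₀ : Set _) | G p.1 = 0}) :=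
    (hcl.isCompact).image continuous_subtype_val
  set A' : Set ℂ := Prod.snd '' (Subtype.val '' {p : (K ×ˢ closedBall (0:ℂ) r₀ : Set _) | G p.1 = 0})
    with hA'
  have hA'c : IsCompact A' := hZc.image continuous_snd
  have hA'1 : ∀ w ∈ A', 1 < ‖w‖ := by
    rintro w ⟨p, ⟨⟨q', hq'mem, rfl⟩, rfl⟩⟩
    obtain ⟨hq1', _⟩ := mem_prod.mp q'.2
    obtain ⟨f, hfV, hfeq⟩ := hq1'
    by_contra hle
    push_neg at hle
    apply hA f hfV q'.1.2 hle
    have hmem0 : G q'.1 = 0 := hq'mem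
    rw [hG] at hmem0
    simp only at hmem0
    rw [← hfeq] at hmem0
    simpa using hmem0
  obtain ⟨a, ha1, haA⟩ := hA'c.exists_forall_le' (continuous_norm.continuousOn)
    hA'1 (a := 1)
  refine ⟨min a r₀, lt_min ha1 h1r₀, lt_of_le_of_lt (min_le_right _ _)
    (by rw [hr₀]; linarith), ?_⟩
  intro f hf w hw
  intro h0
  have hwr₀ : w ∈ closedBall (0:ℂ) r₀ :=
    mem_closedBall_zero_iff.mpr ((le_of_lt hw).trans (min_le_right _ _))
  have hmem : ((UniformOnFun.ofFun (S 1)) f, w) ∈ K ×ˢ closedBall (0:ℂ) r₀ :=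
    mem_prod.mpr ⟨mem_image_of_mem _ hf, hwr₀⟩
  have hG0 : G ((UniformOnFun.ofFun (S 1)) f, w) = 0 := by
    rw [hG]
    simpa using h0
  have hwA' : w ∈ A' := by
    refine ⟨((UniformOnFun.ofFun (S 1)) f, w), ⟨⟨⟨((UniformOnFun.ofFun (S 1)) f, w), hmem⟩, hG0, rfl⟩, rfl⟩⟩
  have := haA w hwA'
  have hlt : ‖w‖ < a := lt_of_lt_of_le hw (min_le_left _ _)
  linarith

theorem stmt15 (V : Set (ℂ → ℂ)) (hV : V ⊆ A0)
    (hc : IsCompact ((UniformOnFun.ofFun (S 1)) '' V))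
    (hcomplete : ∀ g ∈ VT V, ∀ x : ℂ, ‖x‖ ≤ 1 → Pt x g ∈ VT V) :
    dual (dual V) = perp (VT V) := by
  ext h
  constructor
  · -- dual (dual V) ⊆ perp (VT V)
    rintro ⟨hhA0, hh⟩
    refine ⟨hhA0, ?_⟩
    rintro g ⟨⟨R, hR1, hgan⟩, hg0, hgT⟩
    have hR0 : (0:ℝ) < R := by linarith
    -- Step A : f * g does not vanish on the closed unit disk
    have hA : ∀ f ∈ V, ∀ w : ℂ, ‖w‖ ≤ 1 → hadamard f g w ≠ 0 := by
      intro f hf w hw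
      have hmem := hcomplete g ⟨⟨R, hR1, hgan⟩, hg0, hgT⟩ w hw
      have := hmem.2.2 f hf
      rwa [hadamard_Pt_right hgan hR0 f w 1, mul_one] at this
    -- Step B : extend to a larger disk
    obtain ⟨x, hx1, hxR, hx⟩ := extend_nonvanishing hV hc hgan hR1 hA
    have hx0 : (0:ℝ) < x := by linarith
    set xc : ℂ := (x : ℂ) with hxc
    have hxcn : ‖xc‖ = x := by
      rw [hxc]
      simp [Complex.norm_real, _root_.abs_of_pos hx0]
    have hxc0 : xc ≠ 0 := by
      rw [hxc]
      exact_mod_cast ne_of_gt hx0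
    -- Step C : Pt xc g ∈ dual V
    have hPt : Pt xc g ∈ dual V := by
      refine ⟨⟨?_, by simp [Pt, hg0]⟩, ?_⟩
      · intro z hz
        apply Pt_analyticAt hgan
        rw [mem_ball_zero_iff] at hz ⊢
        rw [norm_mul, hxcn]
        calc x * ‖z‖ < x * 1 := by exact mul_lt_mul_of_pos_left hz hx0
          _ < R := by rwa [mul_one]
      · intro f hf z hz
        rw [hadamard_Pt_right hgan hR0]
        apply hx f hf
        rw [norm_mul, hxcn]
        rw [mem_ball_zero_iff] at hz
        calc x * ‖z‖ < x * 1 := by exact mul_lt_mul_of_pos_left hz hx0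
          _ = x := mul_one x
    -- Step D : evaluate at 1/xc
    have hmem : (1 / xc) ∈ ball (0:ℂ) 1 := by
      rw [mem_ball_zero_iff, norm_div, hxcn, norm_one]
      rw [div_lt_one hx0]
      exact hx1
    have := hh (Pt xc g) hPt (1/xc) hmem
    rwa [hadamard_Pt_left hgan hR0, mul_one_div_cancel hxc0] at this
  · -- perp (VT V) ⊆ dual (dual V)
    rintro ⟨hhA0, hp⟩
    refine ⟨hhA0, ?_⟩
    rintro f ⟨⟨hfan, hf0⟩, hfd⟩ z hz
    by_cases hz0 : z = 0
    · rw [hz0, hadamard_zero, hf0, hhA0.2]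
      simp
    · have hzn : 0 < ‖z‖ := norm_pos_iff.mpr hz0
      rw [mem_ball_zero_iff] at hz
      have hPt : Pt z f ∈ VT V := by
        refine ⟨⟨‖z‖⁻¹, ?_, ?_⟩, by simp [Pt, hf0], ?_⟩
        · exact (one_lt_inv₀ hzn).mpr hz
        · intro w hw
          apply Pt_analyticAt hfan
          rw [mem_ball_zero_iff] at hw ⊢
          rw [norm_mul]
          calc ‖z‖ * ‖w‖ < ‖z‖ * ‖z‖⁻¹ := mul_lt_mul_of_pos_left hw hzn
            _ = 1 := mul_inv_cancel₀ (ne_of_gt hzn)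
        · intro v hv
          rw [hadamard_Pt_right hfan one_pos, mul_one]
          exact hfd v hv z (mem_ball_zero_iff.mpr hz)
      have := hp (Pt z f) hPt
      rwa [hadamard_Pt_left hfan one_pos, mul_one] at this
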